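/- arXiv:1701.04495 — 2 statements merged into one kernel-verified Lean document; each statement's English description precedes it below -/
import Mathlib

section
/- Let G be a group, Γ ⊆ G a countable subgroup, and ‖·‖ : G → ℝ a function with ‖x‖ ≥ 1 for all x ∈ G; set ‖x‖_{Γ\G} := inf_{γ∈Γ} ‖γx‖. Let d > 0 be such that M_d := sup_{x∈G} ∑_{γ∈Γ} ‖γx‖^{-d} < ∞. Let n ≥ 0 and C ≥ 0, and let h : G → ℂ satisfy |h(x)| ≤ C·‖x‖^{-(d+n)} for all x ∈ G. Then for every x ∈ G the series ∑_{γ∈Γ} |h(γx)| converges and ∑_{γ∈Γ} |h(γx)| ≤ C·M_d·‖x‖_{Γ\G}^{-n}. -/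
/-- The core Poincaré-series estimate: if `M_d = sup_x ∑_{γ∈Γ} ‖γx‖^{-d} < ∞` and
`|h(x)| ≤ C‖x‖^{-(d+n)}`, then `∑_{γ∈Γ} |h(γx)|` converges and is bounded by
`C · M_d · ‖x‖_{Γ\G}^{-n}`. -/
theorem stmt5 {G : Type*} [Group G] (Γ : Subgroup G) [Countable Γ]
    (N : G → ℝ) (hN1 : ∀ x, 1 ≤ N x)
    (d : ℝ) (hd : 0 < d) (Md : ℝ)
    (hsum : ∀ x : G, Summable fun γ : Γ => N ((γ : G) * x) ^ (-d))
    (hMd : ∀ x : G, (∑' γ : Γ, N ((γ : G) * x) ^ (-d)) ≤ Md)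
    (n : ℝ) (hn : 0 ≤ n) (C : ℝ) (hC : 0 ≤ C)
    (h : G → ℂ) (hh : ∀ x : G, ‖h x‖ ≤ C * N x ^ (-(d + n))) :
    ∀ x : G, (Summable fun γ : Γ => ‖h ((γ : G) * x)‖) ∧
      (∑' γ : Γ, ‖h ((γ : G) * x)‖) ≤
        C * Md * (⨅ γ : Γ, N ((γ : G) * x)) ^ (-n) := by
  intro x
  set q : ℝ := ⨅ γ : Γ, N ((γ : G) * x) with hq
  have hbdd : BddBelow (Set.range fun γ : Γ => N ((γ : G) * x)) :=
    ⟨1, by rintro _ ⟨γ, rfl⟩; exact hN1 _⟩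
  have hq1 : 1 ≤ q := le_ciInf fun γ => hN1 _
  have hq0 : 0 < q := lt_of_lt_of_le one_pos hq1
  have key : ∀ γ : Γ, ‖h ((γ : G) * x)‖ ≤
      C * q ^ (-n) * N ((γ : G) * x) ^ (-d) := by
    intro γ
    have hNγ : 0 < N ((γ : G) * x) := lt_of_lt_of_le one_pos (hN1 _)
    have hqle : q ≤ N ((γ : G) * x) := ciInf_le hbdd γ
    have h1 : N ((γ : G) * x) ^ (-(d + n)) =
        N ((γ : G) * x) ^ (-d) * N ((γ : G) * x) ^ (-n) := by
      rw [← Real.rpow_add hNγ]; ring_nf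
    have h2 : N ((γ : G) * x) ^ (-n) ≤ q ^ (-n) :=
      Real.rpow_le_rpow_of_nonpos hq0 hqle (neg_nonpos.mpr hn)
    calc ‖h ((γ : G) * x)‖ ≤ C * N ((γ : G) * x) ^ (-(d + n)) := hh _
      _ = C * N ((γ : G) * x) ^ (-d) * N ((γ : G) * x) ^ (-n) := by rw [h1]; ring
      _ ≤ C * N ((γ : G) * x) ^ (-d) * q ^ (-n) := by
          apply mul_le_mul_of_nonneg_left h2
          exact mul_nonneg hC (Real.rpow_nonneg hNγ.le _)
      _ = C * q ^ (-n) * N ((γ : G) * x) ^ (-d) := by ring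
  have hsum' : Summable fun γ : Γ => C * q ^ (-n) * N ((γ : G) * x) ^ (-d) :=
    (hsum x).mul_left _
  have hS : Summable fun γ : Γ => ‖h ((γ : G) * x)‖ :=
    Summable.of_nonneg_of_le (fun γ => norm_nonneg _) key hsum'
  refine ⟨hS, ?_⟩
  calc (∑' γ : Γ, ‖h ((γ : G) * x)‖)
      ≤ ∑' γ : Γ, C * q ^ (-n) * N ((γ : G) * x) ^ (-d) := Summable.tsum_le_tsum key hS hsum'
    _ = C * q ^ (-n) * ∑' γ : Γ, N ((γ : G) * x) ^ (-d) := tsum_mul_left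
    _ ≤ C * q ^ (-n) * Md := by
        apply mul_le_mul_of_nonneg_left (hMd x)
        exact mul_nonneg hC (Real.rpow_nonneg hq0.le _)
    _ = C * Md * q ^ (-n) := by ring
end

section
/- Let G be a locally compact Hausdorff topological group with left Haar measure μ, Γ ⊆ G a countable subgroup, and ‖·‖ : G → ℝ a measurable function with ‖x‖ ≥ 1 for all x ∈ G. Let d > 0 be such that M_d := sup_{x∈G} ∑_{γ∈Γ} ‖γx‖^{-d} < ∞. Let φ ∈ L¹(G, μ), let K ≥ 0, and let f : G → ℂ be measurable with |f(x)| ≤ K·‖x‖^{-d} for all x ∈ G. Then for each γ ∈ Γ the function x ↦ φ(γ⁻¹x)·f(x) is μ-integrable, and ∑_{γ∈Γ} |∫_G φ(γ⁻¹x)·f(x) dμ(x)| ≤ K·M_d·∫_G |φ| dμ; in particular the series ∑_{γ∈Γ} ∫_G φ(γ⁻¹x)·f(x) dμ(x) converges absolutely. -/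
open MeasureTheory

/-- Absolute convergence of the Poincaré series of an `L¹` function paired against a function
dominated by `K‖x‖^{-d}`: each `x ↦ φ(γ⁻¹x) f(x)` is integrable, and
`∑_{γ∈Γ} |∫_G φ(γ⁻¹x) f(x) dμ(x)| ≤ K · M_d · ∫_G |φ| dμ`. -/
theorem stmt6 {G : Type*} [Group G] [TopologicalSpace G] [IsTopologicalGroup G]
    [LocallyCompactSpace G] [T2Space G] [MeasurableSpace G] [BorelSpace G]
    (μ : Measure G) [μ.IsHaarMeasure]
    (Γ : Subgroup G) [Countable Γ]
    (N : G → ℝ) (hNmeas : Measurable N) (hN1 : ∀ x, 1 ≤ N x)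
    (d : ℝ) (hd : 0 < d) (Md : ℝ)
    (hsum : ∀ x : G, Summable fun γ : Γ => N ((γ : G) * x) ^ (-d))
    (hMd : ∀ x : G, (∑' γ : Γ, N ((γ : G) * x) ^ (-d)) ≤ Md)
    (φ : G → ℂ) (hφ : Integrable φ μ)
    (K : ℝ) (hK : 0 ≤ K)
    (f : G → ℂ) (hf : Measurable f)
    (hfb : ∀ x : G, ‖f x‖ ≤ K * N x ^ (-d)) :
    (∀ γ : Γ, Integrable (fun x => φ (((γ : G))⁻¹ * x) * f x) μ) ∧
    (Summable fun γ : Γ => ‖∫ x, φ (((γ : G))⁻¹ * x) * f x ∂μ‖) ∧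
    (∑' γ : Γ, ‖∫ x, φ (((γ : G))⁻¹ * x) * f x ∂μ‖) ≤
      K * Md * ∫ x, ‖φ x‖ ∂μ := by
  -- basic rpow facts
  have hNpow_nonneg : ∀ x : G, (0:ℝ) ≤ N x ^ (-d) := fun x =>
    Real.rpow_nonneg (le_trans zero_le_one (hN1 x)) _
  have hNpow_le_one : ∀ x : G, N x ^ (-d) ≤ 1 := fun x =>
    Real.rpow_le_one_of_one_le_of_nonpos (hN1 x) (by linarith)
  have hgmeas : Measurable fun x : G => K * N x ^ (-d) := by measurability
  have hgbd : ∀ x : G, ‖K * N x ^ (-d)‖ ≤ K := by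
    intro x
    rw [Real.norm_eq_abs, abs_of_nonneg (mul_nonneg hK (hNpow_nonneg x))]
    calc K * N x ^ (-d) ≤ K * 1 :=
          mul_le_mul_of_nonneg_left (hNpow_le_one x) hK
      _ = K := mul_one K
  -- integrability of each product
  have hint : ∀ γ : Γ, Integrable (fun x => φ (((γ : G))⁻¹ * x) * f x) μ := by
    intro γ
    have h1 : Integrable (fun x => φ (((γ : G))⁻¹ * x)) μ := hφ.comp_mul_left _
    have h2 : Integrable (fun x => f x * φ (((γ : G))⁻¹ * x)) μ :=
      h1.bdd_mul hf.aestronglyMeasurable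
        (c := K) (Filter.Eventually.of_forall fun x => by
            exact le_trans (hfb x) (le_trans (le_abs_self _)
            (by rw [← Real.norm_eq_abs]; exact hgbd x)))
    simpa [mul_comm] using h2
  refine ⟨hint, ?_⟩
  -- the dominating sequence
  set F : Γ → ℝ := fun γ => ∫ y, ‖φ y‖ * (K * N ((γ : G) * y) ^ (-d)) ∂μ with hF
  have habsφ : Integrable (fun y => ‖φ y‖) μ := by
    simpa using hφ.norm
  have hFint : ∀ γ : Γ, Integrable (fun y => ‖φ y‖ *
      (K * N ((γ : G) * y) ^ (-d))) μ := by
    intro γ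
    have h2 : Integrable (fun y => (K * N ((γ : G) * y) ^ (-d)) * ‖φ y‖) μ :=
      habsφ.bdd_mul ((hgmeas.comp (measurable_const_mul _)).aestronglyMeasurable)
        (c := K) (Filter.Eventually.of_forall fun x => hgbd _)
    simpa [mul_comm] using h2
  -- pointwise bound of each integral by F γ
  have hle : ∀ γ : Γ, ‖∫ x, φ (((γ : G))⁻¹ * x) * f x ∂μ‖ ≤ F γ := by
    intro γ
    have h1 : ‖∫ x, φ (((γ : G))⁻¹ * x) * f x ∂μ‖ ≤
        ∫ x, ‖φ (((γ : G))⁻¹ * x) * f x‖ ∂μ := by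
      exact norm_integral_le_integral_norm _
    have h2 : ∫ x, ‖φ (((γ : G))⁻¹ * x) * f x‖ ∂μ ≤
        ∫ x, ‖φ (((γ : G))⁻¹ * x)‖ * (K * N x ^ (-d)) ∂μ := by
      refine integral_mono (hint γ).norm ?_ ?_
      · have := hFint γ
        have heq : (fun x => ‖φ (((γ : G))⁻¹ * x)‖ * (K * N x ^ (-d))) =
            fun x => (fun y => ‖φ y‖ * (K * N ((γ : G) * y) ^ (-d)))
              (((γ : G))⁻¹ * x) := by
          funext x
          simp [mul_assoc]
        rw [heq]
        exact (hFint γ).comp_mul_left _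
      · intro x
        show ‖φ (((γ : G))⁻¹ * x) * f x‖ ≤
          ‖φ (((γ : G))⁻¹ * x)‖ * (K * N x ^ (-d))
        rw [norm_mul]
        exact mul_le_mul_of_nonneg_left (hfb x) (norm_nonneg _)
    have h3 : ∫ x, ‖φ (((γ : G))⁻¹ * x)‖ * (K * N x ^ (-d)) ∂μ = F γ := by
      rw [hF]
      have := integral_mul_left_eq_self
        (fun x => ‖φ (((γ : G))⁻¹ * x)‖ * (K * N x ^ (-d))) ((γ : G)) (μ := μ)
      rw [← this]
      congr 1
      funext y
      simp [mul_assoc]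
    exact le_trans h1 (le_trans h2 (le_of_eq h3))
  -- F is nonnegative
  have hFnonneg : ∀ γ : Γ, 0 ≤ F γ := by
    intro γ
    exact integral_nonneg fun y =>
      mul_nonneg (norm_nonneg _) (mul_nonneg hK (hNpow_nonneg _))
  -- finite sums of F are bounded
  have hsumbd : ∀ s : Finset Γ, ∑ γ ∈ s, F γ ≤ K * Md * ∫ x, ‖φ x‖ ∂μ := by
    intro s
    have h1 : ∑ γ ∈ s, F γ = ∫ y, ∑ γ ∈ s, ‖φ y‖ *
        (K * N ((γ : G) * y) ^ (-d)) ∂μ :=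
      (integral_finset_sum s fun γ _ => hFint γ).symm
    rw [h1]
    have h2 : Integrable (fun y => (K * Md) * ‖φ y‖) μ := habsφ.const_mul _
    have h3 : ∫ y, ∑ γ ∈ s, ‖φ y‖ * (K * N ((γ : G) * y) ^ (-d)) ∂μ ≤
        ∫ y, (K * Md) * ‖φ y‖ ∂μ := by
      refine integral_mono (integrable_finset_sum s fun γ _ => hFint γ) h2 ?_
      intro y
      have hsle : ∑ γ ∈ s, N ((γ : G) * y) ^ (-d) ≤ Md :=
        le_trans (Summable.sum_le_tsum s (fun γ _ => hNpow_nonneg _) (hsum y)) (hMd y)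
      calc ∑ γ ∈ s, ‖φ y‖ * (K * N ((γ : G) * y) ^ (-d))
          = ‖φ y‖ * (K * ∑ γ ∈ s, N ((γ : G) * y) ^ (-d)) := by
            rw [Finset.mul_sum, Finset.mul_sum]
        _ ≤ ‖φ y‖ * (K * Md) :=
            mul_le_mul_of_nonneg_left (mul_le_mul_of_nonneg_left hsle hK)
              (norm_nonneg _)
        _ = (K * Md) * ‖φ y‖ := by ring
    calc ∫ y, ∑ γ ∈ s, ‖φ y‖ * (K * N ((γ : G) * y) ^ (-d)) ∂μ
        ≤ ∫ y, (K * Md) * ‖φ y‖ ∂μ := h3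
      _ = K * Md * ∫ x, ‖φ x‖ ∂μ := integral_const_mul _ _
  have hFsummable : Summable F := summable_of_sum_le hFnonneg hsumbd
  have hsummable : Summable fun γ : Γ =>
      ‖∫ x, φ (((γ : G))⁻¹ * x) * f x ∂μ‖ :=
    hFsummable.of_nonneg_of_le (fun γ => norm_nonneg _) hle
  refine ⟨hsummable, ?_⟩
  calc ∑' γ : Γ, ‖∫ x, φ (((γ : G))⁻¹ * x) * f x ∂μ‖
      ≤ ∑' γ : Γ, F γ := Summable.tsum_le_tsum hle hsummable hFsummable
    _ ≤ K * Md * ∫ x, ‖φ x‖ ∂μ := Summable.tsum_le_of_sum_le hFsummable hsumbd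
end
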